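/- (Drawdown Modulation Lemma.) Let (X_k)_{k≥0} be an i.i.d. sequence of real random variables on a probability space with common law μ such that μ([X_min, X_max]) = 1 and both X_min and X_max lie in the topological support of μ, where −1 < X_min < 0 < X_max. Let the investment process I(k) be measurable with respect to σ(X_0, …, X_{k−1}), let V(0) > 0 be a constant, and define V(k+1) = V(k) + I(k)·X_k, V_max(k) = max_{0 ≤ i ≤ k} V(i), and d(k) = (V_max(k) − V(k))/V_max(k). Then for d_max ∈ (0,1): almost surely d(k) ≤ d_max for all k = 0, 1, …, N if and only if almost surely, for all k < N, −((d_max − d(k))/((1 − d(k))·X_max))·V(k) ≤ I(k) ≤ ((d_max − d(k))/((1 − d(k))·|X_min|))·V(k). -/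

import Mathlib

open MeasureTheory ProbabilityTheory

/-- Running maximum `V_max(k) = max_{0 ≤ i ≤ k} V(i)` of the account value. -/
noncomputable def runMax (V : ℕ → ℝ) (k : ℕ) : ℝ :=
  (Finset.range (k + 1)).sup' Finset.nonempty_range_add_one V

/-- Percentage drawdown `d(k) = (V_max(k) - V(k)) / V_max(k)`. -/
noncomputable def drawdown (V : ℕ → ℝ) (k : ℕ) : ℝ :=
  (runMax V k - V k) / runMax V k

lemma le_runMax (V : ℕ → ℝ) {i k : ℕ} (h : i ≤ k) : V i ≤ runMax V k :=
  Finset.le_sup' V (Finset.mem_range.2 (Nat.lt_succ_of_le h))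

lemma runMax_succ (V : ℕ → ℝ) (k : ℕ) :
    runMax V (k + 1) = max (V (k + 1)) (runMax V k) := by
  apply le_antisymm
  · apply Finset.sup'_le
    intro i hi
    have hik : i ≤ k + 1 := Nat.lt_succ_iff.mp (Finset.mem_range.mp hi)
    rcases eq_or_lt_of_le hik with h | h
    · subst h; exact le_max_left _ _
    · exact le_max_of_le_right (le_runMax V (Nat.lt_succ_iff.mp h))
  · exact max_le (le_runMax V le_rfl)
      (Finset.sup'_le _ _ fun i hi =>
        le_runMax V (le_trans (Nat.lt_succ_iff.mp (Finset.mem_range.mp hi)) (Nat.le_succ k)))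

lemma runMax_zero (V : ℕ → ℝ) : runMax V 0 = V 0 := by
  simp [runMax]

lemma modalg (w v m dmax : ℝ) (hw : w ≠ 0) (hv : v ≠ 0) (hm : m ≠ 0) :
    (dmax - (w - v) / w) / ((1 - (w - v) / w) * m) * v = (v - (1 - dmax) * w) / m := by
  have h1 : 1 - (w - v) / w = v / w := by field_simp; ring
  rw [h1]
  field_simp
  ring

lemma step_det {Xmin Xmax dmax v w i x : ℝ} (hXmin0 : Xmin < 0) (hXmax : 0 < Xmax)
    (hc : (1 - dmax) * w ≤ v)
    (hlb : -((v - (1 - dmax) * w) / Xmax) ≤ i)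
    (hub : i ≤ (v - (1 - dmax) * w) / |Xmin|)
    (hx1 : Xmin ≤ x) (hx2 : x ≤ Xmax) :
    (1 - dmax) * w ≤ v + i * x := by
  have hc0 : 0 ≤ v - (1 - dmax) * w := by linarith
  have habs : |Xmin| = -Xmin := abs_of_neg hXmin0
  rcases le_or_gt 0 i with hi | hi
  · have h2 : i * (-Xmin) ≤ v - (1 - dmax) * w := by
      rw [habs] at hub
      exact (le_div_iff₀ (by linarith)).mp hub
    nlinarith
  · have h3 : -((v - (1 - dmax) * w) / Xmax) * Xmax = -(v - (1 - dmax) * w) := by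
      field_simp
    have h2 : -(v - (1 - dmax) * w) ≤ i * Xmax := by
      rw [← h3]; exact mul_le_mul_of_nonneg_right hlb hXmax.le
    nlinarith

lemma step_viol {dmax v w i x y e δ m : ℝ} (he : e ≤ (1 - dmax) * w - v - i * y)
    (hi : |i| ≤ m) (hx : |x - y| ≤ δ) (hmδ : m * δ < e) :
    v + i * x < (1 - dmax) * w := by
  have h1 : i * (x - y) ≤ |i| * |x - y| := by
    calc i * (x - y) ≤ |i * (x - y)| := le_abs_self _
    _ = |i| * |x - y| := abs_mul _ _
  have h2 : |i| * |x - y| ≤ m * δ :=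
    mul_le_mul hi hx (abs_nonneg _) ((abs_nonneg i).trans hi)
  nlinarith

/-- Drawdown Modulation Lemma: almost surely the drawdown stays below `dmax` up to
stage `N` if and only if almost surely the investment satisfies the modulation
condition at every stage `k < N`. -/
theorem drawdown_modulation_lemma
    {Ω : Type*} [MeasurableSpace Ω] (P : Measure Ω) [IsProbabilityMeasure P]
    (X : ℕ → Ω → ℝ) (μ : Measure ℝ) [IsProbabilityMeasure μ]
    (Xmin Xmax dmax : ℝ)
    (hXmin1 : -1 < Xmin) (hXmin0 : Xmin < 0) (hXmax : 0 < Xmax)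
    (hdmax0 : 0 < dmax) (hdmax1 : dmax < 1)
    (hmeas : ∀ k, Measurable (X k))
    (hindep : iIndepFun X P)
    (hlaw : ∀ k, Measure.map (X k) P = μ)
    (hbox : μ (Set.Icc Xmin Xmax) = 1)
    -- `Xmin` and `Xmax` lie in the topological support of `μ`:
    (hsuppmin : ∀ U : Set ℝ, IsOpen U → Xmin ∈ U → 0 < μ U)
    (hsuppmax : ∀ U : Set ℝ, IsOpen U → Xmax ∈ U → 0 < μ U)
    (I : ℕ → Ω → ℝ)
    -- `I k` is measurable w.r.t. `σ(X_0, …, X_{k-1})`: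
    (hadapted : ∀ k, Measurable[MeasurableSpace.comap
        (fun ω => (fun i : Fin k => X i ω)) MeasurableSpace.pi] (I k))
    (v0 : ℝ) (hv0 : 0 < v0)
    (V : ℕ → Ω → ℝ)
    (hV0 : ∀ ω, V 0 ω = v0)
    (hrec : ∀ k ω, V (k + 1) ω = V k ω + I k ω * X k ω)
    (N : ℕ) :
    (∀ᵐ ω ∂P, ∀ k ≤ N, drawdown (fun n => V n ω) k ≤ dmax) ↔
    (∀ᵐ ω ∂P, ∀ k < N,
      -((dmax - drawdown (fun n => V n ω) k) /
          ((1 - drawdown (fun n => V n ω) k) * Xmax)) * V k ω ≤ I k ω ∧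
      I k ω ≤ ((dmax - drawdown (fun n => V n ω) k) /
          ((1 - drawdown (fun n => V n ω) k) * |Xmin|)) * V k ω) := by
  classical
  let F : ℕ → MeasurableSpace Ω := fun k =>
    MeasurableSpace.comap (fun ω => (fun i : Fin k => X i ω)) MeasurableSpace.pi
  have hFmono : ∀ {k l : ℕ}, k ≤ l → F k ≤ F l := by
    intro k l hkl
    have hfac : (fun ω => (fun i : Fin k => X i ω)) =
        (fun (g : Fin l → ℝ) (i : Fin k) => g (Fin.castLE hkl i)) ∘
          (fun ω => (fun i : Fin l => X i ω)) := rfl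
    show MeasurableSpace.comap _ _ ≤ _
    rw [hfac, ← MeasurableSpace.comap_comp]
    exact MeasurableSpace.comap_mono
      (Measurable.comap_le (measurable_pi_lambda _ fun i => measurable_pi_apply _))
  have hXmF : ∀ k, Measurable[F (k + 1)] (X k) := by
    intro k
    have ht : Measurable[F (k + 1)] (fun ω => (fun i : Fin (k + 1) => X i ω)) :=
      Measurable.of_comap_le le_rfl
    exact (measurable_pi_apply (⟨k, Nat.lt_succ_self k⟩ : Fin (k + 1))).comp ht
  have hIF : ∀ k, Measurable[F k] (I k) := hadapted
  have hVF : ∀ k, Measurable[F k] (V k) := by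
    intro k; induction k with
    | zero =>
      have hva : V 0 = fun _ => v0 := funext hV0
      rw [hva]; exact measurable_const
    | succ k ih =>
      have hva : V (k + 1) = fun ω => V k ω + I k ω * X k ω := funext fun ω => hrec k ω
      rw [hva]
      exact (ih.mono (hFmono (Nat.le_succ k)) le_rfl).add
        (((hIF k).mono (hFmono (Nat.le_succ k)) le_rfl).mul (hXmF k))
  have hWF : ∀ k, Measurable[F k] (fun ω => runMax (fun n => V n ω) k) := by
    intro k; induction k with
    | zero =>
      have : (fun ω => runMax (fun n => V n ω) 0) = V 0 := funext fun ω => runMax_zero _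
      rw [this]; exact hVF 0
    | succ k ih =>
      have : (fun ω => runMax (fun n => V n ω) (k + 1)) =
          fun ω => max (V (k + 1) ω) (runMax (fun n => V n ω) k) :=
        funext fun ω => runMax_succ _ k
      rw [this]
      exact (hVF (k + 1)).max (ih.mono (hFmono (Nat.le_succ k)) le_rfl)
  have hDF : ∀ k, Measurable[F k] (fun ω => drawdown (fun n => V n ω) k) := by
    intro k
    exact ((hWF k).sub (hVF k)).div (hWF k)
  have hlawset : ∀ k (U : Set ℝ), MeasurableSet U → P (X k ⁻¹' U) = μ U := by
    intro k U hU
    rw [← hlaw k, Measure.map_apply (hmeas k) hU]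
  have hindep2 : ∀ k (B : Set Ω), MeasurableSet[F k] B → ∀ (U : Set ℝ), MeasurableSet U →
      P (B ∩ X k ⁻¹' U) = P B * P (X k ⁻¹' U) := by
    intro k B hB U hU
    obtain ⟨s, hs, rfl⟩ := hB
    have hfin : IndepFun (fun ω (i : ↥(Finset.range k)) => X (i : ℕ) ω)
        (fun ω (i : ↥({k} : Finset ℕ)) => X (i : ℕ) ω) P :=
      hindep.indepFun_finset (Finset.range k) {k}
        (Finset.disjoint_singleton_right.mpr (by simp)) hmeas
    have hcomp : IndepFun (fun ω => (fun i : Fin k => X i ω)) (X k) P := by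
      have h1 : (fun ω => (fun i : Fin k => X i ω)) =
          (fun (g : ↥(Finset.range k) → ℝ) (i : Fin k) =>
            g ⟨(i : ℕ), Finset.mem_range.mpr i.isLt⟩) ∘
          (fun ω (i : ↥(Finset.range k)) => X (i : ℕ) ω) := rfl
      have h2 : X k = (fun (g : ↥({k} : Finset ℕ) → ℝ) =>
            g ⟨k, Finset.mem_singleton_self k⟩) ∘
          (fun ω (i : ↥({k} : Finset ℕ)) => X (i : ℕ) ω) := rfl
      rw [h1, h2]
      exact hfin.comp (measurable_pi_lambda _ fun i => measurable_pi_apply _)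
        (measurable_pi_apply _)
    exact hcomp.measure_inter_preimage_eq_mul s U hs hU
  have hWge : ∀ ω k, v0 ≤ runMax (fun n => V n ω) k := by
    intro ω k
    have h0 := le_runMax (fun n => V n ω) (Nat.zero_le k)
    simpa [hV0 ω] using h0
  have hWpos : ∀ ω k, 0 < runMax (fun n => V n ω) k :=
    fun ω k => lt_of_lt_of_le hv0 (hWge ω k)
  have hdle : ∀ ω k, drawdown (fun n => V n ω) k ≤ dmax ↔
      (1 - dmax) * runMax (fun n => V n ω) k ≤ V k ω := by
    intro ω k
    rw [show drawdown (fun n => V n ω) k =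
      (runMax (fun n => V n ω) k - V k ω) / runMax (fun n => V n ω) k from rfl,
      div_le_iff₀ (hWpos ω k)]
    constructor <;> intro h2 <;> linarith
  have hbox' : ∀ᵐ ω ∂P, ∀ k, X k ω ∈ Set.Icc Xmin Xmax := by
    rw [ae_all_iff]
    intro k
    have h2 : P ((X k ⁻¹' Set.Icc Xmin Xmax)ᶜ) = 0 := by
      rw [measure_compl ((hmeas k) measurableSet_Icc) (measure_ne_top _ _),
        hlawset k _ measurableSet_Icc, hbox, measure_univ]
      simp
    exact ae_iff.mpr h2
  constructor
  · -- hard direction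
    intro h
    have hnull : ∀ j, j ≤ N → P {ω | ¬ drawdown (fun n => V n ω) j ≤ dmax} = 0 := by
      intro j hj
      exact ae_iff.mp (h.mono fun ω hω => hω j hj)
    rw [ae_all_iff]
    intro k
    rcases lt_or_ge k N with hkN | hkN
    swap
    · exact Filter.Eventually.of_forall fun ω hk => absurd hk (not_lt.mpr hkN)
    have hXne : |Xmin| ≠ 0 := abs_ne_zero.mpr (ne_of_lt hXmin0)
    have hconst : ∀ c : ℝ, Measurable[F k] (fun _ : Ω => c) :=
      fun c => @measurable_const ℝ Ω _ (F k) c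
    have hle_meas : ∀ (f g : Ω → ℝ), Measurable[F k] f → Measurable[F k] g →
        MeasurableSet[F k] {ω | f ω ≤ g ω} :=
      fun f g hf hg => (hf.prodMk hg) measurableSet_le'
    have hlt_meas : ∀ (f g : Ω → ℝ), Measurable[F k] f → Measurable[F k] g →
        MeasurableSet[F k] {ω | f ω < g ω} :=
      fun f g hf hg => (hf.prodMk hg) measurableSet_lt'
    -- the generic "kill a violation set" engine
    have key : ∀ (y : ℝ), (∀ U : Set ℝ, IsOpen U → y ∈ U → 0 < μ U) →
        ∀ (S : Set Ω), MeasurableSet[F k] S →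
        (∀ ω ∈ S, 0 < (1 - dmax) * runMax (fun n => V n ω) k - V k ω - I k ω * y) →
        P S = 0 := by
      intro y hy S hS hpos
      set E : ℕ → ℕ → Set Ω := fun m n =>
        (S ∩ {ω | |I k ω| ≤ (m : ℝ)}) ∩
          {ω | 1 / ((n : ℝ) + 1) ≤
            (1 - dmax) * runMax (fun n' => V n' ω) k - V k ω - I k ω * y} with hE
      have hcover : S ⊆ ⋃ (m : ℕ) (n : ℕ), E m n := by
        intro ω hω
        obtain ⟨m, hm⟩ := exists_nat_ge (|I k ω|)
        obtain ⟨n, hn⟩ := exists_nat_one_div_lt (hpos ω hω)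
        exact Set.mem_iUnion.mpr ⟨m, Set.mem_iUnion.mpr ⟨n, ⟨⟨hω, hm⟩, hn.le⟩⟩⟩
      have hEnull : ∀ m n, P (E m n) = 0 := by
        intro m n
        set e : ℝ := 1 / ((n : ℝ) + 1) with hedef
        have he : 0 < e := by positivity
        set δ : ℝ := e / (2 * ((m : ℝ) + 1)) with hδdef
        have hδ : 0 < δ := by positivity
        have hmδ : (m : ℝ) * δ < e := by
          rw [hδdef]
          rw [show (m : ℝ) * (e / (2 * ((m : ℝ) + 1))) = (m : ℝ) * e / (2 * ((m : ℝ) + 1)) by ring,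
            div_lt_iff₀ (by positivity)]
          nlinarith [he, Nat.cast_nonneg (α := ℝ) m]
        have hU : 0 < μ (Set.Ioo (y - δ) (y + δ)) :=
          hy _ isOpen_Ioo (by constructor <;> linarith)
        have hEmeas : MeasurableSet[F k] (E m n) := by
          refine (hS.inter ?_).inter ?_
          · exact hle_meas _ _ (continuous_abs.measurable.comp (hIF k)) (hconst _)
          · exact hle_meas _ _ (hconst _)
              ((((hconst (1 - dmax)).mul (hWF k)).sub (hVF k)).sub ((hIF k).mul_const y))
        have hsub : E m n ∩ X k ⁻¹' Set.Ioo (y - δ) (y + δ) ⊆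
            {ω | ¬ drawdown (fun n' => V n' ω) (k + 1) ≤ dmax} := by
          rintro ω ⟨⟨⟨hωS, hωm⟩, hωn⟩, hωU⟩
          have hw := hWpos ω k
          have hVk1 : V (k + 1) ω < (1 - dmax) * runMax (fun n' => V n' ω) k := by
            rw [hrec k ω]
            refine step_viol hωn hωm ?_ hmδ
            have hmem : X k ω ∈ Set.Ioo (y - δ) (y + δ) := hωU
            rw [abs_le]
            exact ⟨by linarith [hmem.1], by linarith [hmem.2]⟩
          have hVk1w : V (k + 1) ω < runMax (fun n' => V n' ω) k := by nlinarith
          have hmaxeq : runMax (fun n' => V n' ω) (k + 1) = runMax (fun n' => V n' ω) k := by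
            rw [runMax_succ]; exact max_eq_right hVk1w.le
          intro hcon
          rw [hdle ω (k + 1), hmaxeq] at hcon
          linarith
        have hzero : P (E m n ∩ X k ⁻¹' Set.Ioo (y - δ) (y + δ)) = 0 :=
          measure_mono_null hsub (hnull (k + 1) hkN)
        rw [hindep2 k _ hEmeas _ measurableSet_Ioo] at hzero
        rcases mul_eq_zero.mp hzero with h0 | h0
        · exact h0
        · rw [hlawset k _ measurableSet_Ioo] at h0
          exact absurd h0 (ne_of_gt hU)
      exact le_antisymm
        (le_trans (measure_mono hcover)
          (le_of_eq (measure_iUnion_null fun m => measure_iUnion_null fun n => hEnull m n)))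
        zero_le
    -- upper bound a.e.
    have hub_ae : ∀ᵐ ω ∂P, I k ω ≤ ((dmax - drawdown (fun n => V n ω) k) /
        ((1 - drawdown (fun n => V n ω) k) * |Xmin|)) * V k ω := by
      set S : Set Ω := {ω | drawdown (fun n => V n ω) k ≤ dmax ∧
        ((dmax - drawdown (fun n => V n ω) k) /
          ((1 - drawdown (fun n => V n ω) k) * |Xmin|)) * V k ω < I k ω} with hSdef
      have hSmeas : MeasurableSet[F k] S := by
        refine MeasurableSet.inter ?_ ?_
        · exact hle_meas _ _ (hDF k) (hconst _)
        · refine hlt_meas _ _ ?_ (hIF k)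
          exact ((((hconst dmax).sub (hDF k)).div
            (((hconst 1).sub (hDF k)).mul_const _)).mul (hVF k))
      have hSpos : ∀ ω ∈ S, 0 < (1 - dmax) * runMax (fun n => V n ω) k - V k ω -
          I k ω * Xmin := by
        rintro ω ⟨hd, hviol⟩
        have hw := hWpos ω k
        have hc : (1 - dmax) * runMax (fun n => V n ω) k ≤ V k ω := (hdle ω k).mp hd
        have hv : 0 < V k ω := lt_of_lt_of_le (by nlinarith) hc
        rw [show drawdown (fun n => V n ω) k =
          (runMax (fun n => V n ω) k - V k ω) / runMax (fun n => V n ω) k from rfl,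
          modalg _ _ _ _ (ne_of_gt hw) (ne_of_gt hv) hXne] at hviol
        have habs : |Xmin| = -Xmin := abs_of_neg hXmin0
        rw [habs] at hviol
        have h2 : V k ω - (1 - dmax) * runMax (fun n => V n ω) k < I k ω * (-Xmin) := by
          rw [div_lt_iff₀ (by linarith)] at hviol
          linarith
        linarith
      have hSnull : P S = 0 := key Xmin hsuppmin S hSmeas hSpos
      have hincl : {ω | ¬ I k ω ≤ ((dmax - drawdown (fun n => V n ω) k) /
          ((1 - drawdown (fun n => V n ω) k) * |Xmin|)) * V k ω} ⊆
          {ω | ¬ drawdown (fun n => V n ω) k ≤ dmax} ∪ S := by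
        intro ω hω
        by_cases hd : drawdown (fun n => V n ω) k ≤ dmax
        · exact Or.inr ⟨hd, not_le.mp hω⟩
        · exact Or.inl hd
      exact ae_iff.mpr (measure_mono_null hincl
        (measure_union_null (hnull k hkN.le) hSnull))
    -- lower bound a.e.
    have hlb_ae : ∀ᵐ ω ∂P, -((dmax - drawdown (fun n => V n ω) k) /
        ((1 - drawdown (fun n => V n ω) k) * Xmax)) * V k ω ≤ I k ω := by
      set S : Set Ω := {ω | drawdown (fun n => V n ω) k ≤ dmax ∧
        I k ω < -((dmax - drawdown (fun n => V n ω) k) /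
          ((1 - drawdown (fun n => V n ω) k) * Xmax)) * V k ω} with hSdef
      have hSmeas : MeasurableSet[F k] S := by
        refine MeasurableSet.inter ?_ ?_
        · exact hle_meas _ _ (hDF k) (hconst _)
        · refine hlt_meas _ _ (hIF k) ?_
          exact (((((hconst dmax).sub (hDF k)).div
            (((hconst 1).sub (hDF k)).mul_const _)).neg).mul (hVF k))
      have hSpos : ∀ ω ∈ S, 0 < (1 - dmax) * runMax (fun n => V n ω) k - V k ω -
          I k ω * Xmax := by
        rintro ω ⟨hd, hviol⟩
        have hw := hWpos ω k
        have hc : (1 - dmax) * runMax (fun n => V n ω) k ≤ V k ω := (hdle ω k).mp hd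
        have hv : 0 < V k ω := lt_of_lt_of_le (by nlinarith) hc
        rw [show drawdown (fun n => V n ω) k =
          (runMax (fun n => V n ω) k - V k ω) / runMax (fun n => V n ω) k from rfl,
          neg_mul, modalg _ _ _ _ (ne_of_gt hw) (ne_of_gt hv) (ne_of_gt hXmax)] at hviol
        have h2 : V k ω - (1 - dmax) * runMax (fun n => V n ω) k < -I k ω * Xmax := by
          rw [lt_neg] at hviol
          exact (div_lt_iff₀ hXmax).mp hviol
        linarith
      have hSnull : P S = 0 := key Xmax hsuppmax S hSmeas hSpos
      have hincl : {ω | ¬ -((dmax - drawdown (fun n => V n ω) k) /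
          ((1 - drawdown (fun n => V n ω) k) * Xmax)) * V k ω ≤ I k ω} ⊆
          {ω | ¬ drawdown (fun n => V n ω) k ≤ dmax} ∪ S := by
        intro ω hω
        by_cases hd : drawdown (fun n => V n ω) k ≤ dmax
        · exact Or.inr ⟨hd, not_le.mp hω⟩
        · exact Or.inl hd
      exact ae_iff.mpr (measure_mono_null hincl
        (measure_union_null (hnull k hkN.le) hSnull))
    filter_upwards [hub_ae, hlb_ae] with ω h1 h2
    exact fun _ => ⟨h2, h1⟩
  · -- easy direction
    intro h
    filter_upwards [h, hbox'] with ω hb hx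
    intro k
    induction k with
    | zero =>
      intro _
      rw [hdle ω 0, runMax_zero, hV0 ω]
      nlinarith
    | succ k ih =>
      intro hk1
      have hkN : k < N := lt_of_lt_of_le (Nat.lt_succ_self k) hk1
      have hdk := ih hkN.le
      have hw := hWpos ω k
      have hc : (1 - dmax) * runMax (fun n => V n ω) k ≤ V k ω := (hdle ω k).mp hdk
      have hv : 0 < V k ω := lt_of_lt_of_le (by nlinarith) hc
      obtain ⟨hlb, hub⟩ := hb k hkN
      rw [show drawdown (fun n => V n ω) k =
        (runMax (fun n => V n ω) k - V k ω) / runMax (fun n => V n ω) k from rfl,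
        modalg _ _ _ _ (ne_of_gt hw) (ne_of_gt hv)
          (abs_ne_zero.mpr (ne_of_lt hXmin0))] at hub
      rw [show drawdown (fun n => V n ω) k =
        (runMax (fun n => V n ω) k - V k ω) / runMax (fun n => V n ω) k from rfl,
        neg_mul, modalg _ _ _ _ (ne_of_gt hw) (ne_of_gt hv) (ne_of_gt hXmax)] at hlb
      have hstep : (1 - dmax) * runMax (fun n => V n ω) k ≤ V k ω + I k ω * X k ω :=
        step_det hXmin0 hXmax hc hlb hub (hx k).1 (hx k).2
      rw [← hrec k ω] at hstep
      rw [hdle ω (k + 1), runMax_succ]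
      rcases max_cases (V (k + 1) ω) (runMax (fun n => V n ω) k) with ⟨h1, h2⟩ | ⟨h1, h2⟩
      · rw [h1]; nlinarith
      · rw [h1]; exact hstep
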